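/- arXiv:1307.6894 — 6 statements merged into one kernel-verified Lean document; each statement's English description precedes it below -/
import Mathlib

section
/- Let S be a set, let {*} be a one-element set, and let n ∈ ℕ. There is a bijection between Histⁿ({*}, S), the set of n-historical functions List {*} → List S, and the set of S-streams, i.e., functions ℕ≥1 → S. -/
/-- A function `f : List R → List S` is *n-historical* if it sends lists of length `t`
to lists of length `t + n`, and it commutes with the operation `∂ = List.dropLast`
of dropping the last entry of a nonempty list. -/
def Historical {R S : Type*} (n : ℕ) (f : List R → List S) : Prop :=
  (∀ ℓ : List R, (f ℓ).length = ℓ.length + n) ∧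
    ∀ ℓ : List R, 1 ≤ ℓ.length → (f ℓ).dropLast = f ℓ.dropLast

lemma unit_list_eq_replicate (ℓ : List Unit) : ℓ = List.replicate ℓ.length () := by
  induction ℓ with
  | nil => rfl
  | cons a l ih => simp [List.replicate_succ]; exact ih

lemma hist_take {S : Type*} {n : ℕ} {f : List Unit → List S} (hf : Historical n f) :
    ∀ b a : ℕ, a ≤ b →
      f (List.replicate a ()) = (f (List.replicate b ())).take (a + n) := by
  intro b
  induction b with
  | zero => intro a ha; interval_cases a
            rw [List.take_of_length_le (by rw [hf.1]; simp)]
  | succ b ih =>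
    intro a ha
    rcases Nat.lt_or_ge a (b+1) with h | h
    · have h' : a ≤ b := Nat.lt_succ_iff.mp h
      have hd := hf.2 (List.replicate (b+1) ()) (by simp)
      have hdr : (List.replicate (b+1) ()).dropLast = List.replicate b () := by
        rw [List.replicate_succ', List.dropLast_concat]
      rw [hdr] at hd
      have hlen : (f (List.replicate (b+1) ())).length = b + 1 + n := by
        rw [hf.1]; simp
      rw [ih a h', ← hd, List.dropLast_eq_take, hlen]
      rw [List.take_take]
      congr 1
      omega
    · have : a = b + 1 := le_antisymm ha h
      subst this
      rw [List.take_of_length_le (by rw [hf.1]; simp)]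

lemma hist_getElem {S : Type*} {n : ℕ} {f : List Unit → List S} (hf : Historical n f)
    (a b i : ℕ) (hia : i < a + n) (hib : i < b + n) :
    (f (List.replicate a ()))[i]'(by rw [hf.1]; simpa using hia) =
    (f (List.replicate b ()))[i]'(by rw [hf.1]; simpa using hib) := by
  rcases le_total a b with h | h
  · rw [List.getElem_of_eq (hist_take hf b a h), List.getElem_take]
  · conv_rhs => rw [List.getElem_of_eq (hist_take hf a b h), List.getElem_take]

/-- For a set `S` and `n ∈ ℕ`, there is a bijection between the set `Histⁿ({*}, S)` of
`n`-historical functions `List {*} → List S` and the set of `S`-streams `ℕ≥1 → S`. -/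
theorem hist_unit_equiv_stream (S : Type*) (n : ℕ) :
    Nonempty ({f : List Unit → List S // Historical n f} ≃ (ℕ+ → S)) := by
  refine ⟨{
    toFun := fun f k => (f.1 (List.replicate k ()))[(k : ℕ) - 1]'(by
      rw [f.2.1]; simp; show (k:ℕ)-1 < (k:ℕ)+n; have := k.pos; omega)
    invFun := fun σ => ⟨fun ℓ => List.ofFn (fun i : Fin (ℓ.length + n) =>
      σ ⟨i + 1, Nat.succ_pos _⟩), ?_, ?_⟩
    left_inv := ?_
    right_inv := ?_ }⟩
  · intro ℓ; simp
  · intro ℓ hℓ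
    have hlen : ℓ.dropLast.length = ℓ.length - 1 := List.length_dropLast
    apply List.ext_getElem
    · simp [hlen]; omega
    · intro i h1 h2
      simp only [List.getElem_dropLast, List.getElem_ofFn]
  · intro ⟨f, hf⟩
    apply Subtype.ext
    funext ℓ
    dsimp only
    rw [show f ℓ = f (List.replicate ℓ.length ()) from by rw [← unit_list_eq_replicate]]
    apply List.ext_getElem
    · simp [hf.1]
    · intro i h1 h2
      simp only [List.getElem_ofFn]
      have h2' : i < ℓ.length + n := by
        have := hf.1 (List.replicate ℓ.length ()); simp at this; omega
      exact hist_getElem hf (i+1) ℓ.length i (by omega) h2'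
  · intro σ
    funext k
    dsimp only
    rw [List.getElem_ofFn]
    exact congrArg σ (Subtype.ext (by simp; show (k:ℕ)-1+1 = (k:ℕ); have := k.pos; omega))
end

section
/- Let S and T be pointed sets and n ∈ ℕ. There is a bijection between Histⁿ(S, T), the set of n-historical functions List S → List T, and Histⁿ_strm(S, T), the set of n-historical stream propagators from S-streams to T-streams. -/
/-- The `t`-restriction of a stream `σ : ℕ≥1 → S`: the list `[σ(1), …, σ(t)]` of its
first `t` values. -/
def restrict {S : Type*} (σ : ℕ+ → S) (t : ℕ) : List S :=
  (List.range t).map fun i => σ ⟨i + 1, Nat.succ_pos i⟩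

/-- A function from `S`-streams to `T`-streams is an *n-historical stream propagator*
if whenever two input streams agree up to time `t`, the output streams agree up to
time `t + n`. -/
def HistoricalStream {S T : Type*} (n : ℕ) (F : (ℕ+ → S) → (ℕ+ → T)) : Prop :=
  ∀ (t : ℕ) (σ σ' : ℕ+ → S), restrict σ t = restrict σ' t →
    restrict (F σ) (t + n) = restrict (F σ') (t + n)

namespace HistAux

lemma restrict_length {S : Type*} (σ : ℕ+ → S) (t : ℕ) : (restrict σ t).length = t := by
  simp [restrict]

lemma restrict_getElem {S : Type*} (σ : ℕ+ → S) {t i : ℕ} (h : i < t) :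
    (restrict σ t)[i]'(by simpa [restrict_length] using h) = σ ⟨i + 1, Nat.succ_pos i⟩ := by
  simp [restrict]

lemma restrict_take {S : Type*} (σ : ℕ+ → S) {s t : ℕ} (h : s ≤ t) :
    (restrict σ t).take s = restrict σ s := by
  simp [restrict, ← List.map_take, List.take_range, Nat.min_eq_left h]

lemma restrict_prefix {S : Type*} (σ : ℕ+ → S) {s t : ℕ} (h : s ≤ t) :
    restrict σ s <+: restrict σ t := by
  rw [← restrict_take σ h]; exact List.take_prefix _ _

lemma dropLast_restrict {S : Type*} (σ : ℕ+ → S) (t : ℕ) :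
    (restrict σ (t + 1)).dropLast = restrict σ t := by
  rw [List.dropLast_eq_take, restrict_length]
  simpa using restrict_take σ (Nat.le_succ t)

def extendL {S : Type*} [Inhabited S] (ℓ : List S) (k : ℕ+) : S :=
  ℓ.getD ((k : ℕ) - 1) default

lemma restrict_extendL {S : Type*} [Inhabited S] (ℓ : List S) :
    restrict (extendL ℓ) ℓ.length = ℓ := by
  apply List.ext_getElem (restrict_length _ _)
  intro i h1 h2
  rw [restrict_getElem _ (by simpa [restrict_length] using h1)]
  simp [extendL, List.getElem?_eq_getElem h2]

lemma restrict_extendL_restrict {S : Type*} [Inhabited S] (σ : ℕ+ → S) (t : ℕ) :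
    restrict (extendL (restrict σ t)) t = restrict σ t := by
  have h := restrict_extendL (restrict σ t)
  rwa [restrict_length] at h

lemma restrict_extendL_dropLast {S : Type*} [Inhabited S] (ℓ : List S) {m : ℕ}
    (h : m ≤ ℓ.length - 1) :
    restrict (extendL ℓ) m = restrict (extendL ℓ.dropLast) m := by
  apply List.ext_getElem (by simp [restrict_length])
  intro i h1 h2
  rw [restrict_length] at h1
  rw [restrict_getElem _ h1, restrict_getElem _ h1]
  have hi : i < ℓ.dropLast.length := by simp; omega
  have hi2 : i < ℓ.length := by simp at hi; omega
  simp [extendL, List.getElem?_eq_getElem hi, List.getElem?_eq_getElem hi2,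
    List.getElem_dropLast]

section
variable {S T : Type*} [Inhabited S] [Inhabited T] {n : ℕ} {f : List S → List T}

lemma hist_take (hf : Historical n f) (ℓ : List S) (k : ℕ) :
    f (ℓ.take k) <+: f ℓ := by
  rcases le_or_gt ℓ.length k with h | h
  · rw [List.take_of_length_le h]
  · -- induct on j = ℓ.length - k
    have key : ∀ j, j ≤ ℓ.length → f (ℓ.take (ℓ.length - j)) <+: f ℓ := by
      intro j
      induction j with
      | zero => intro _; simp
      | succ j ih =>
        intro hj
        have h1 : ℓ.length - (j + 1) = (ℓ.length - j) - 1 := by omega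
        have h2 : (ℓ.take (ℓ.length - j)).dropLast = ℓ.take (ℓ.length - (j + 1)) := by
          rw [List.dropLast_eq_take, List.length_take, List.take_take]
          congr 1; omega
        rw [← h2, ← hf.2 _ (by rw [List.length_take]; omega)]
        exact (List.dropLast_prefix _).trans (ih (by omega))
    have := key (ℓ.length - k) (by omega)
    rwa [Nat.sub_sub_self (le_of_lt h)] at this

lemma hist_mono (hf : Historical n f) {ℓ₁ ℓ₂ : List S} (h : ℓ₁ <+: ℓ₂) :
    f ℓ₁ <+: f ℓ₂ := by
  rw [List.prefix_iff_eq_take.mp h]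
  exact hist_take hf ℓ₂ ℓ₁.length

def toStream (n : ℕ) (f : List S → List T) (σ : ℕ+ → S) (k : ℕ+) : T :=
  (f (restrict σ k)).getD ((k : ℕ) - 1) default

lemma key_entry (hf : Historical n f) (σ : ℕ+ → S) (t i : ℕ) (hi : i < t + n) :
    (f (restrict σ (i + 1))).getD i default = (f (restrict σ t)).getD i default := by
  rcases Nat.le_total (i + 1) t with h | h
  · have hpre := hist_mono hf (restrict_prefix σ h)
    have hlen : i < (f (restrict σ (i + 1))).length := by
      rw [hf.1, restrict_length]; omega
    rw [List.getD_eq_getElem _ _ hlen,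
      List.getD_eq_getElem _ _ (lt_of_lt_of_le hlen hpre.length_le),
      List.IsPrefix.getElem hpre]
  · have hpre := hist_mono hf (restrict_prefix σ h)
    have hlen : i < (f (restrict σ t)).length := by
      rw [hf.1, restrict_length]; omega
    rw [List.getD_eq_getElem _ _ hlen,
      List.getD_eq_getElem _ _ (lt_of_lt_of_le hlen hpre.length_le),
      List.IsPrefix.getElem hpre]

lemma restrict_toStream (hf : Historical n f) (σ : ℕ+ → S) (t : ℕ) :
    restrict (toStream n f σ) (t + n) = f (restrict σ t) := by
  apply List.ext_getElem (by rw [restrict_length, hf.1, restrict_length])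
  intro i h1 h2
  rw [restrict_length] at h1
  rw [restrict_getElem _ h1]
  show (f (restrict σ (i + 1))).getD (i + 1 - 1) default = _
  rw [Nat.add_sub_cancel, key_entry hf σ t i h1, List.getD_eq_getElem _ _ h2]

lemma toStream_hist (hf : Historical n f) : HistoricalStream n (toStream n f) := by
  intro t σ σ' h
  rw [restrict_toStream hf, restrict_toStream hf, h]

def toList (n : ℕ) (F : (ℕ+ → S) → (ℕ+ → T)) (ℓ : List S) : List T :=
  restrict (F (extendL ℓ)) (ℓ.length + n)

lemma toList_hist {F : (ℕ+ → S) → (ℕ+ → T)} (hF : HistoricalStream n F) :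
    Historical n (toList n F) := by
  constructor
  · intro ℓ; simp [toList, restrict_length]
  · intro ℓ hℓ
    unfold toList
    have hm : ℓ.length + n = (ℓ.length - 1 + n) + 1 := by omega
    rw [hm, dropLast_restrict, List.length_dropLast]
    exact hF (ℓ.length - 1) _ _ (restrict_extendL_dropLast ℓ le_rfl)

lemma left_inv (hf : Historical n f) : toList n (toStream n f) = f := by
  funext ℓ
  unfold toList
  rw [restrict_toStream hf, restrict_extendL]

lemma right_inv {F : (ℕ+ → S) → (ℕ+ → T)} (hF : HistoricalStream n F) :
    toStream n (toList n F) = F := by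
  funext σ k
  unfold toStream toList
  rw [restrict_length]
  have h1 : restrict (extendL (restrict σ (k : ℕ))) (k : ℕ) = restrict σ (k : ℕ) :=
    restrict_extendL_restrict σ k
  rw [hF (k : ℕ) _ _ h1]
  have hk : (k : ℕ) - 1 < (k : ℕ) + n := by have := k.pos; omega
  rw [List.getD_eq_getElem _ _ (by rw [restrict_length]; exact hk),
    restrict_getElem _ hk]
  congr 1
  apply PNat.coe_injective
  have := k.pos
  simp
  omega

end
end HistAux

/-- For pointed sets `S`, `T` and `n ∈ ℕ`, there is a bijection between the set
`Histⁿ(S, T)` of `n`-historical functions `List S → List T` and the set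
`Histⁿ_strm(S, T)` of `n`-historical stream propagators from `S`-streams to
`T`-streams. -/
theorem hist_equiv_histStream (S T : Type*) [Inhabited S] [Inhabited T] (n : ℕ) :
    Nonempty ({f : List S → List T // Historical n f} ≃
      {F : (ℕ+ → S) → (ℕ+ → T) // HistoricalStream n F}) := by
  exact ⟨{
    toFun := fun f => ⟨HistAux.toStream n f.1, HistAux.toStream_hist f.2⟩
    invFun := fun F => ⟨HistAux.toList n F.1, HistAux.toList_hist F.2⟩
    left_inv := fun f => Subtype.ext (HistAux.left_inv f.2)
    right_inv := fun F => Subtype.ext (HistAux.right_inv F.2) }⟩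
end

section
/- Let τ : W → X, φ : X → Y, ψ : Y → Z be wiring diagrams. Then e_{ψ∘φ, τ} = h_{ψ,φ} ∘ e_{φ,τ} as functions In X ⊔ Out X → Sup(ψ∘φ). -/
universe u

variable {InW OutW InX OutX InY OutY InZ OutZ Dτ Dφ Dψ : Type u}

/-- The map `e_{ψ,φ} = s_ψ|_{In Y} ⊔ id_{Out Y} : In Y ⊔ Out Y → Sup(ψ)` associated
to composable wiring diagrams `φ : X → Y` and `ψ : Y → Z`. -/
def eMap (sψ : OutZ ⊕ InY ⊕ Dψ → InZ ⊕ OutY ⊕ Dψ) :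
    InY ⊕ OutY → InZ ⊕ OutY ⊕ Dψ
  | Sum.inl i => sψ (Sum.inr (Sum.inl i))
  | Sum.inr o => Sum.inr (Sum.inl o)

/-- The map `f_{ψ,φ} : Sup(ψ) → Sup(ψ∘φ)`, the identity on `In Z` and `D_ψ`, and
equal to `s_φ|_{Out Y}` (landing in `Out X ⊔ D_φ` by non-instantaneity, encoded by
`sφOut`) on `Out Y`. -/
def fMap (sφOut : OutY → OutX ⊕ Dφ) :
    InZ ⊕ OutY ⊕ Dψ → InZ ⊕ OutX ⊕ Dφ ⊕ Dψ
  | Sum.inl z => Sum.inl z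
  | Sum.inr (Sum.inl o) =>
      match sφOut o with
      | Sum.inl x => Sum.inr (Sum.inl x)
      | Sum.inr d => Sum.inr (Sum.inr (Sum.inl d))
  | Sum.inr (Sum.inr d) => Sum.inr (Sum.inr (Sum.inr d))

/-- The map `h_{ψ,φ} : Sup(φ) → Sup(ψ∘φ)`, equal to `f_{ψ,φ} ∘ s_ψ|_{In Y}` on
`In Y` and the identity on `Out X` and `D_φ`. -/
def hMap (sψ : OutZ ⊕ InY ⊕ Dψ → InZ ⊕ OutY ⊕ Dψ) (sφOut : OutY → OutX ⊕ Dφ) :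
    InY ⊕ OutX ⊕ Dφ → InZ ⊕ OutX ⊕ Dφ ⊕ Dψ
  | Sum.inl i => fMap sφOut (sψ (Sum.inr (Sum.inl i)))
  | Sum.inr (Sum.inl x) => Sum.inr (Sum.inl x)
  | Sum.inr (Sum.inr d) => Sum.inr (Sum.inr (Sum.inl d))

/-- The supplier assignment of the composite wiring diagram `ψ ∘ φ`, with delay set
`D_φ ⊔ D_ψ`: it equals `h_{ψ,φ} ∘ s_φ` on `In X ⊔ D_φ` and `f_{ψ,φ} ∘ s_ψ` on
`Out Z ⊔ D_ψ`. -/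
def compS (sφ : OutY ⊕ InX ⊕ Dφ → InY ⊕ OutX ⊕ Dφ)
    (sψ : OutZ ⊕ InY ⊕ Dψ → InZ ⊕ OutY ⊕ Dψ) (sφOut : OutY → OutX ⊕ Dφ) :
    OutZ ⊕ InX ⊕ Dφ ⊕ Dψ → InZ ⊕ OutX ⊕ Dφ ⊕ Dψ
  | Sum.inl z => fMap sφOut (sψ (Sum.inl z))
  | Sum.inr (Sum.inl i) => hMap sψ sφOut (sφ (Sum.inr (Sum.inl i)))
  | Sum.inr (Sum.inr (Sum.inl d)) => hMap sψ sφOut (sφ (Sum.inr (Sum.inr d)))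
  | Sum.inr (Sum.inr (Sum.inr d)) => fMap sφOut (sψ (Sum.inr (Sum.inr d)))

/-- For wiring diagrams `τ : W → X`, `φ : X → Y`, `ψ : Y → Z`, one has
`e_{ψ∘φ, τ} = h_{ψ,φ} ∘ e_{φ,τ}` as functions `In X ⊔ Out X → Sup(ψ∘φ)`. -/
theorem e_comp_eq_h_comp_e
    [Fintype InW] [Fintype OutW] [Fintype InX] [Fintype OutX] [Fintype InY]
    [Fintype OutY] [Fintype InZ] [Fintype OutZ]
    [Fintype Dτ] [Fintype Dφ] [Fintype Dψ]
    (sτ : OutX ⊕ InW ⊕ Dτ → InX ⊕ OutW ⊕ Dτ)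
    (sτOut : OutX → OutW ⊕ Dτ)
    (hτ : ∀ x : OutX, sτ (Sum.inl x) = Sum.inr (sτOut x))
    (sφ : OutY ⊕ InX ⊕ Dφ → InY ⊕ OutX ⊕ Dφ)
    (sφOut : OutY → OutX ⊕ Dφ)
    (hφ : ∀ y : OutY, sφ (Sum.inl y) = Sum.inr (sφOut y))
    (sψ : OutZ ⊕ InY ⊕ Dψ → InZ ⊕ OutY ⊕ Dψ)
    (sψOut : OutZ → OutY ⊕ Dψ)
    (hψ : ∀ z : OutZ, sψ (Sum.inl z) = Sum.inr (sψOut z)) :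
    eMap (InY := InX) (OutY := OutX) (compS sφ sψ sφOut) =
      hMap sψ sφOut ∘ eMap sφ := by
  funext a
  cases a with
  | inl i => rfl
  | inr o => rfl
end

section
/- Let A, B be sets and let f : List A → List B be a 1-historical function. Define C : List A → List (A × B) by well-founded recursion on length: C([]) = [] and, for ℓ of length ≥ 1, C(ℓ) = zip ℓ (f (map fst (C(∂ℓ)))). Then for every list ℓ of length ≥ 1, C(ℓ) = zip ℓ (f(∂ℓ)). -/
/-- The cascade of a function `f : List A → List B`: `C([]) = []` and for nonempty `ℓ`,
`C(ℓ) = zip ℓ (f (map fst (C(∂ℓ))))`. -/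
def cascade {A B : Type*} (f : List A → List B) : List A → List (A × B)
  | [] => []
  | a :: as => List.zip (a :: as) (f (List.map Prod.fst (cascade f (a :: as).dropLast)))
termination_by ℓ => ℓ.length
decreasing_by simp [List.length_dropLast]

lemma map_fst_cascade {A B : Type*} (f : List A → List B) (hf : Historical 1 f) :
    ∀ ℓ : List A, List.map Prod.fst (cascade f ℓ) = ℓ := by
  suffices h : ∀ (n : ℕ) (ℓ : List A), ℓ.length = n →
      List.map Prod.fst (cascade f ℓ) = ℓ from fun ℓ => h ℓ.length ℓ rfl
  intro n
  induction n using Nat.strong_induction_on with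
  | _ n ih =>
    intro ℓ hn
    match ℓ with
    | [] => simp [cascade]
    | a :: as =>
      rw [cascade]
      have hlt : (a :: as).dropLast.length < n := by
        simp [List.length_dropLast] at hn ⊢; omega
      have hd := ih _ hlt _ rfl
      rw [hd, List.map_fst_zip]
      rw [hf.1]
      simp [List.length_dropLast]

/-- If `f` is 1-historical, then for every nonempty list `ℓ`,
the cascade satisfies `C(ℓ) = zip ℓ (f (∂ℓ))`. -/
theorem cascade_eq_zip {A B : Type*} (f : List A → List B) (hf : Historical 1 f)
    (ℓ : List A) (hℓ : 1 ≤ ℓ.length) :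
    cascade f ℓ = List.zip ℓ (f ℓ.dropLast) := by
  match ℓ with
  | a :: as =>
    rw [cascade, map_fst_cascade f hf]
end

section
/- Let A, B be sets and let f : List A → List B be a 1-historical function. Define C : List A → List (A × B) by C([]) = [] and, for ℓ of length ≥ 1, C(ℓ) = zip ℓ (f (map fst (C(∂ℓ)))). Then the function ℓ ↦ f(map fst (C(ℓ))) equals f; that is, the identity wiring diagram acts as the identity on 1-historical propagators: P(id)(f) = f. -/
/-- The identity wiring diagram acts as the identity on 1-historical propagators:
if `f` is 1-historical, then `P(id)(f) = ℓ ↦ f (map fst (C(ℓ)))` equals `f`. -/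
theorem identity_wiring_diagram_acts_trivially {A B : Type*}
    (f : List A → List B) (hf : Historical 1 f) :
    (fun ℓ : List A => f (List.map Prod.fst (cascade f ℓ))) = f := by
  have key : ∀ (n : ℕ) (ℓ : List A), ℓ.length = n → List.map Prod.fst (cascade f ℓ) = ℓ := by
    intro n
    induction n using Nat.strong_induction_on with
    | _ n ih =>
      intro ℓ hn
      match ℓ with
      | [] => simp [cascade]
      | a :: as =>
        rw [cascade]
        have hdl : (a :: as).dropLast.length < n := by
          simp [List.length_dropLast] at hn ⊢; omega
        rw [ih _ hdl _ rfl]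
        apply List.map_fst_zip
        rw [hf.1]
        simp [List.length_dropLast]
  funext ℓ
  rw [key ℓ.length ℓ rfl]
end

section
/- Define plus : List (ℕ × ℕ) → List ℕ by plus(ℓ) = 1 :: map (fun p => p.1 + p.2) ℓ, and define C : List ℕ → List (ℕ × ℕ) by well-founded recursion on length: C([]) = [] and, for ℓ of length t ≥ 1, C(ℓ) = zip ℓ (plus(C(∂ℓ))). Then for every list ℓ of length t and every n with 1 ≤ n ≤ t + 1, the n-th entry of plus(C(ℓ)) equals 1 + Σ_{i=1}^{n−1} ℓ(i). In particular the propagator ℓ ↦ plus(C(ℓ)) computes "one plus the running total" of its input stream. -/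
/-- The addition propagator: it sends a list of pairs of natural numbers to `1`
followed by the list of coordinatewise sums (a 1-historical function). -/
def plusProp : List (ℕ × ℕ) → List ℕ :=
  fun ℓ => 1 :: ℓ.map fun p => p.1 + p.2

/-- The cascade of the addition propagator along the feedback wiring diagram:
`C([]) = []` and, for nonempty `ℓ`, `C(ℓ) = zip ℓ (plus (C(∂ℓ)))`. -/
def cascadePlus : List ℕ → List (ℕ × ℕ)
  | [] => []
  | a :: as => List.zip (a :: as) (plusProp (cascadePlus (a :: as).dropLast))
termination_by ℓ => ℓ.length
decreasing_by simp [List.length_dropLast]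

lemma plusProp_length (l : List (ℕ × ℕ)) : (plusProp l).length = l.length + 1 := by
  simp [plusProp]

lemma cascadePlus_concat (as : List ℕ) (a : ℕ) :
    cascadePlus (as ++ [a]) = (as ++ [a]).zip (plusProp (cascadePlus as)) := by
  cases as with
  | nil =>
    show cascadePlus [a] = _
    rw [cascadePlus]
    simp [cascadePlus]
  | cons b bs =>
    show cascadePlus (b :: (bs ++ [a])) = _
    rw [cascadePlus, show (b :: (bs ++ [a])).dropLast = b :: bs by
      rw [← List.cons_append, List.dropLast_concat]]
    rfl

/-- The propagator `ℓ ↦ plus (C(ℓ))` computes "one plus the running total": for every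
list `ℓ` of length `t` and every `n` with `1 ≤ n ≤ t + 1`, the `n`-th entry (1-indexed)
of `plus (C(ℓ))` is `1 + Σ_{i=1}^{n-1} ℓ(i)`. -/
theorem plus_cascade_running_total (ℓ : List ℕ) :
    (plusProp (cascadePlus ℓ)).length = ℓ.length + 1 ∧
      ∀ n : ℕ, 1 ≤ n → n ≤ ℓ.length + 1 →
        (plusProp (cascadePlus ℓ)).getD (n - 1) 0 = 1 + (ℓ.take (n - 1)).sum := by
  induction ℓ using List.reverseRecOn with
  | nil =>
    refine ⟨by simp [cascadePlus, plusProp], ?_⟩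
    intro n h1 h2
    simp only [List.length_nil] at h2
    interval_cases n
    simp [cascadePlus, plusProp]
  | append_singleton as a ih =>
    obtain ⟨ihlen, ihval⟩ := ih
    have hP : (plusProp (cascadePlus as)).length = as.length + 1 := ihlen
    have hzlen : ((as ++ [a]).zip (plusProp (cascadePlus as))).length = as.length + 1 := by
      rw [List.length_zip, hP]; simp
    constructor
    · rw [cascadePlus_concat]
      rw [plusProp_length, hzlen]
      simp
    · intro n h1 h2
      rw [cascadePlus_concat]
      match n, h1 with
      | 1, _ => simp [plusProp]
      | (m+2), _ =>
        have hm : m ≤ as.length := by simpa using h2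
        have hmlt : m < ((as ++ [a]).zip (plusProp (cascadePlus as))).length := by
          rw [hzlen]; omega
        have hmlt2 : m < (as ++ [a]).length := by simp; omega
        have hmlt3 : m < (plusProp (cascadePlus as)).length := by rw [hP]; omega
        show (plusProp _).getD (m + 1) 0 = _
        rw [plusProp]
        simp only [List.getD_cons_succ]
        rw [List.getD_eq_getElem _ _ (by simpa using hmlt)]
        rw [List.getElem_map, List.getElem_zip]
        have hPval : (plusProp (cascadePlus as))[m] = 1 + (as.take m).sum := by
          rw [← List.getD_eq_getElem _ 0 hmlt3]
          have := ihval (m + 1) (by omega) (by omega)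
          simpa using this
        have htake : ((as ++ [a]).take (m + 1)).sum
            = ((as ++ [a]).take m).sum + (as ++ [a])[m] := by
          exact List.sum_take_succ _ m hmlt2
        have htake2 : (as ++ [a]).take m = as.take m := by
          rw [List.take_append_of_le_length hm]
        simp only [hPval]
        rw [show m + 2 - 1 = m + 1 from rfl, htake, htake2]
        omega
end
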